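/- With the weights w_{vu} = u_t(n−u_t) on the comparability graph between V_i and V_{i+1} in [n]^D, if (v,u) is an edge of color l (i.e., u_t = v_t + 1 = l), then deg(v) = deg(u) + D(n−1) − 2(i+1) + 2l − n + 1, where deg denotes weighted degree. -/

import Mathlib

open Classical

/-- The rank of `x ∈ {0,...,n-1}^D`: the sum of its coordinates. -/
def rank {n D : ℕ} (x : Fin D → Fin n) : ℕ := ∑ t, (x t : ℕ)

/-- The weight of an edge `(v,u)` of the comparability graph between consecutive levels:
if `u` covers `v` by incrementing the (unique) coordinate `t`, the weight is
`u_t (n - u_t)`. -/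
def edgeWeight {n D : ℕ} (v u : Fin D → Fin n) : ℕ :=
  ∑ t, if (u t : ℕ) = (v t : ℕ) + 1 ∧ (∀ s, s ≠ t → u s = v s)
       then (u t : ℕ) * (n - (u t : ℕ)) else 0

/-- Weighted degree of `v ∈ V_i` towards `V_{i+1}`. -/
noncomputable def degUp {n D : ℕ} (v : Fin D → Fin n) : ℕ :=
  ∑ u ∈ Finset.univ.filter (fun u : Fin D → Fin n => v < u ∧ rank u = rank v + 1),
    edgeWeight v u

/-- Weighted degree of `u ∈ V_{i+1}` towards `V_i`. -/
noncomputable def degDown {n D : ℕ} (u : Fin D → Fin n) : ℕ :=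
  ∑ v ∈ Finset.univ.filter (fun v : Fin D → Fin n => v < u ∧ rank u = rank v + 1),
    edgeWeight v u

lemma cover_char {n D : ℕ} {v u : Fin D → Fin n} (hlt : v < u) (hr : rank u = rank v + 1) :
    ∃ s, (u s : ℕ) = (v s : ℕ) + 1 ∧ ∀ r, r ≠ s → u r = v r := by
  obtain ⟨hle, s, hs⟩ := Pi.lt_def.mp hlt
  have hle' : ∀ r, (v r : ℕ) ≤ u r := fun r => hle r
  have hsum : ∑ r, ((u r : ℕ) - (v r : ℕ)) = 1 := by
    have h1 : ∑ r, (u r : ℕ) = ∑ r, ((v r : ℕ) + ((u r : ℕ) - (v r : ℕ))) :=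
      Finset.sum_congr rfl (fun r _ => by have := hle' r; omega)
    rw [Finset.sum_add_distrib] at h1
    unfold rank at hr
    omega
  have hs' : (v s : ℕ) < u s := hs
  have hle1 : (u s : ℕ) - (v s : ℕ) ≤ 1 := by
    have h2 := Finset.single_le_sum (f := fun r => (u r : ℕ) - (v r : ℕ))
      (fun r _ => Nat.zero_le _) (Finset.mem_univ s)
    omega
  refine ⟨s, by omega, fun r hrs => ?_⟩
  have hz : ∑ r ∈ Finset.univ.erase s, ((u r : ℕ) - (v r : ℕ)) = 0 := by
    rw [← Finset.add_sum_erase _ _ (Finset.mem_univ s)] at hsum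
    omega
  have := Finset.sum_eq_zero_iff.mp hz r (Finset.mem_erase.mpr ⟨hrs, Finset.mem_univ r⟩)
  have := hle' r
  exact Fin.ext (by omega)

lemma edgeWeight_cover {n D : ℕ} {v u : Fin D → Fin n} {s : Fin D}
    (hus : (u s : ℕ) = (v s : ℕ) + 1) (hoth : ∀ r, r ≠ s → u r = v r) :
    edgeWeight v u = (u s : ℕ) * (n - (u s : ℕ)) := by
  unfold edgeWeight
  rw [Finset.sum_eq_single s]
  · rw [if_pos ⟨hus, hoth⟩]
  · intro r _ hrs
    rw [if_neg]
    rintro ⟨h1, -⟩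
    have := hoth r hrs
    rw [this] at h1
    omega
  · intro h; exact absurd (Finset.mem_univ s) h

section

variable {n D : ℕ} (hn : 0 < n)

/-- increment coordinate `s` (mod n, but used only when no wrap). -/
def upd (hn : 0 < n) (v : Fin D → Fin n) (s : Fin D) : Fin D → Fin n :=
  fun r => if r = s then ⟨((v s : ℕ) + 1) % n, Nat.mod_lt _ hn⟩ else v r

lemma upd_self {v : Fin D → Fin n} {s : Fin D} (h : (v s : ℕ) + 1 < n) :
    (upd hn v s s : ℕ) = (v s : ℕ) + 1 := by
  simp [upd, Nat.mod_eq_of_lt h]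

lemma upd_other {v : Fin D → Fin n} {s r : Fin D} (h : r ≠ s) :
    upd hn v s r = v r := by simp [upd, h]

lemma upd_rank {v : Fin D → Fin n} {s : Fin D} (h : (v s : ℕ) + 1 < n) :
    rank (upd hn v s) = rank v + 1 := by
  unfold rank
  have : ∀ r, (upd hn v s r : ℕ) = (v r : ℕ) + (if r = s then 1 else 0) := by
    intro r
    by_cases hrs : r = s
    · subst hrs; rw [upd_self hn h]; simp
    · rw [upd_other hn hrs]; simp [hrs]
  rw [Finset.sum_congr rfl (fun r _ => this r), Finset.sum_add_distrib]
  simp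

lemma upd_lt {v : Fin D → Fin n} {s : Fin D} (h : (v s : ℕ) + 1 < n) :
    v < upd hn v s := by
  rw [Pi.lt_def]
  constructor
  · intro r
    by_cases hrs : r = s
    · subst hrs
      show (v r : ℕ) ≤ _
      rw [upd_self hn h]; omega
    · rw [upd_other hn hrs]
  · exact ⟨s, show (v s : ℕ) < _ by rw [upd_self hn h]; omega⟩

lemma degUp_eq (hn : 0 < n) (v : Fin D → Fin n) :
    degUp v = ∑ s, ((v s : ℕ) + 1) * (n - ((v s : ℕ) + 1)) := by
  have hA : Finset.univ.filter (fun u' : Fin D → Fin n => v < u' ∧ rank u' = rank v + 1)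
      = (Finset.univ.filter (fun s : Fin D => (v s : ℕ) + 1 < n)).image (upd hn v) := by
    ext u'
    simp only [Finset.mem_filter, Finset.mem_image, Finset.mem_univ, true_and]
    constructor
    · rintro ⟨hlt, hr⟩
      obtain ⟨s, hs1, hs2⟩ := cover_char hlt hr
      have hsn : (v s : ℕ) + 1 < n := hs1 ▸ (u' s).isLt
      refine ⟨s, hsn, funext fun r => ?_⟩
      by_cases hrs : r = s
      · subst hrs
        exact Fin.ext (by rw [upd_self hn hsn, ← hs1])
      · rw [upd_other hn hrs, hs2 r hrs]
    · rintro ⟨s, hsn, rfl⟩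
      exact ⟨upd_lt hn hsn, upd_rank hn hsn⟩
  have hinj : ∀ s₁ ∈ Finset.univ.filter (fun s : Fin D => (v s : ℕ) + 1 < n),
      ∀ s₂ ∈ Finset.univ.filter (fun s : Fin D => (v s : ℕ) + 1 < n),
      upd hn v s₁ = upd hn v s₂ → s₁ = s₂ := by
    intro s₁ h₁ s₂ h₂ heq
    by_contra hne
    have e1 : (upd hn v s₁ s₁ : ℕ) = (v s₁ : ℕ) + 1 :=
      upd_self hn (by simpa using h₁)
    have e2 : upd hn v s₂ s₁ = v s₁ := upd_other hn hne
    rw [heq, e2] at e1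
    omega
  unfold degUp
  rw [hA, Finset.sum_image hinj]
  have hterm : ∀ s ∈ Finset.univ.filter (fun s : Fin D => (v s : ℕ) + 1 < n),
      edgeWeight v (upd hn v s) = ((v s : ℕ) + 1) * (n - ((v s : ℕ) + 1)) := by
    intro s hs
    have hsn : (v s : ℕ) + 1 < n := by simpa using hs
    rw [edgeWeight_cover (upd_self hn hsn) (fun r hr => upd_other hn hr), upd_self hn hsn]
  rw [Finset.sum_congr rfl hterm]
  exact Finset.sum_filter_of_ne (fun s _ hne => by
    by_contra h
    have hvs := (v s).isLt
    have heq : (v s : ℕ) + 1 = n := by omega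
    rw [heq, Nat.sub_self, Nat.mul_zero] at hne
    exact hne rfl)

end

section
variable {n D : ℕ}

/-- decrement coordinate `s`. -/
def dnd (u : Fin D → Fin n) (s : Fin D) : Fin D → Fin n :=
  fun r => if r = s then ⟨(u s : ℕ) - 1, lt_of_le_of_lt (Nat.sub_le _ _) (u s).isLt⟩ else u r

lemma dnd_self (u : Fin D → Fin n) (s : Fin D) : (dnd u s s : ℕ) = (u s : ℕ) - 1 := by
  simp [dnd]

lemma dnd_other {u : Fin D → Fin n} {s r : Fin D} (h : r ≠ s) : dnd u s r = u r := by
  simp [dnd, h]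

lemma dnd_rank {u : Fin D → Fin n} {s : Fin D} (h : 0 < (u s : ℕ)) :
    rank u = rank (dnd u s) + 1 := by
  unfold rank
  have key : ∀ r, (u r : ℕ) = (dnd u s r : ℕ) + (if r = s then 1 else 0) := by
    intro r
    by_cases hrs : r = s
    · subst hrs; rw [dnd_self]; simp; omega
    · rw [dnd_other hrs]; simp [hrs]
  rw [Finset.sum_congr rfl (fun r _ => key r), Finset.sum_add_distrib]
  simp

lemma dnd_lt {u : Fin D → Fin n} {s : Fin D} (h : 0 < (u s : ℕ)) :
    dnd u s < u := by
  rw [Pi.lt_def]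
  constructor
  · intro r
    by_cases hrs : r = s
    · subst hrs
      show (dnd u r r : ℕ) ≤ _
      rw [dnd_self]; omega
    · rw [dnd_other hrs]
  · exact ⟨s, show (dnd u s s : ℕ) < _ by rw [dnd_self]; omega⟩

lemma degDown_eq (u : Fin D → Fin n) :
    degDown u = ∑ s, (u s : ℕ) * (n - (u s : ℕ)) := by
  have hA : Finset.univ.filter (fun v' : Fin D → Fin n => v' < u ∧ rank u = rank v' + 1)
      = (Finset.univ.filter (fun s : Fin D => 0 < (u s : ℕ))).image (dnd u) := by
    ext v'
    simp only [Finset.mem_filter, Finset.mem_image, Finset.mem_univ, true_and]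
    constructor
    · rintro ⟨hlt, hr⟩
      obtain ⟨s, hs1, hs2⟩ := cover_char hlt hr
      refine ⟨s, by omega, funext fun r => ?_⟩
      by_cases hrs : r = s
      · subst hrs
        exact Fin.ext (by rw [dnd_self]; omega)
      · rw [dnd_other hrs, hs2 r hrs]
    · rintro ⟨s, hsn, rfl⟩
      exact ⟨dnd_lt hsn, dnd_rank hsn⟩
  have hinj : ∀ s₁ ∈ Finset.univ.filter (fun s : Fin D => 0 < (u s : ℕ)),
      ∀ s₂ ∈ Finset.univ.filter (fun s : Fin D => 0 < (u s : ℕ)),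
      dnd u s₁ = dnd u s₂ → s₁ = s₂ := by
    intro s₁ h₁ s₂ h₂ heq
    by_contra hne
    have h₁' : 0 < (u s₁ : ℕ) := by simpa using h₁
    have e1 : (dnd u s₁ s₁ : ℕ) = (u s₁ : ℕ) - 1 := dnd_self u s₁
    have e2 : dnd u s₂ s₁ = u s₁ := dnd_other hne
    rw [heq, e2] at e1
    omega
  unfold degDown
  rw [hA, Finset.sum_image hinj]
  have hterm : ∀ s ∈ Finset.univ.filter (fun s : Fin D => 0 < (u s : ℕ)),
      edgeWeight (dnd u s) u = (u s : ℕ) * (n - (u s : ℕ)) := by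
    intro s hs
    have hsn : 0 < (u s : ℕ) := by simpa using hs
    exact edgeWeight_cover (by rw [dnd_self]; omega) (fun r hr => (dnd_other hr).symm)
  rw [Finset.sum_congr rfl hterm]
  exact Finset.sum_filter_of_ne (fun s _ hne => by
    by_contra h
    have : (u s : ℕ) = 0 := by omega
    rw [this, Nat.zero_mul] at hne
    exact hne rfl)

end


/-- If `(v,u)` is an edge of color `l` (i.e. `u_t = v_t + 1 = l` in the unique changed
coordinate `t`), with `v ∈ V_i` and `u ∈ V_{i+1}`, then
`deg(v) = deg(u) + D(n-1) - 2(i+1) + 2l - n + 1`. -/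
theorem stmt_10 (n D i l : ℕ) (v u : Fin D → Fin n) (t : Fin D)
    (hv : rank v = i) (hu : rank u = i + 1) (hvu : v < u)
    (ht : (u t : ℕ) = l ∧ (v t : ℕ) + 1 = l) :
    (degUp v : ℤ) = (degDown u : ℤ) + D * (n - 1) - 2 * (i + 1) + 2 * l - n + 1 := by
  have hn : 0 < n := (v t).pos
  -- the unique changed coordinate is t
  obtain ⟨s, hs1, hs2⟩ := cover_char hvu (by omega)
  have hst : s = t := by
    by_contra hne
    have := hs2 t (Ne.symm hne)
    rw [this] at ht
    omega
  have hs1' : (u t : ℕ) = (v t : ℕ) + 1 := hst ▸ hs1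
  have hoth : ∀ r, r ≠ t → (u r : ℕ) = (v r : ℕ) := fun r hr => by
    rw [hs2 r (hst ▸ hr)]
  -- cast degree formulas
  have hup : (degUp v : ℤ) = ∑ r, (((v r : ℕ) : ℤ) + 1) * ((n : ℤ) - ((v r : ℕ) + 1)) := by
    rw [degUp_eq hn v]
    push_cast
    refine Finset.sum_congr rfl (fun r _ => ?_)
    have h1 : (v r : ℕ) + 1 ≤ n := (v r).isLt
    rw [Nat.cast_sub h1]
    push_cast
    ring
  have hdn : (degDown u : ℤ) = ∑ r, ((u r : ℕ) : ℤ) * ((n : ℤ) - (u r : ℕ)) := by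
    rw [degDown_eq u]
    push_cast
    refine Finset.sum_congr rfl (fun r _ => ?_)
    have h1 : (u r : ℕ) ≤ n := le_of_lt (u r).isLt
    rw [Nat.cast_sub h1]
  have hdiff : (degUp v : ℤ) - degDown u
      = (∑ r, ((n : ℤ) - 2 * (v r : ℕ) - 1)) - ((n : ℤ) - 2 * (v t : ℕ) - 1) := by
    rw [hup, hdn, ← Finset.sum_sub_distrib]
    have : ∀ r, (((v r : ℕ) : ℤ) + 1) * ((n : ℤ) - ((v r : ℕ) + 1))
        - ((u r : ℕ) : ℤ) * ((n : ℤ) - (u r : ℕ))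
        = ((n : ℤ) - 2 * (v r : ℕ) - 1) - (if r = t then (n : ℤ) - 2 * (v r : ℕ) - 1 else 0) := by
      intro r
      by_cases hrt : r = t
      · subst hrt
        have : ((u r : ℕ) : ℤ) = ((v r : ℕ) : ℤ) + 1 := by exact_mod_cast congrArg Nat.cast hs1'
        rw [this]
        simp
      · rw [hoth r hrt]
        simp [hrt]
        ring
    rw [Finset.sum_congr rfl (fun r _ => this r), Finset.sum_sub_distrib]
    simp
  have hsumv : ∑ r, (((v r : ℕ) : ℤ)) = (i : ℤ) := by
    rw [← hv]; unfold rank; push_cast; rfl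
  have hsum1 : ∑ r, ((n : ℤ) - 2 * (v r : ℕ) - 1) = D * n - 2 * i - D := by
    rw [Finset.sum_sub_distrib, Finset.sum_sub_distrib, ← Finset.mul_sum, hsumv]
    simp [Finset.card_univ]
  have hvt : ((v t : ℕ) : ℤ) = (l : ℤ) - 1 := by omega
  rw [hsum1, hvt] at hdiff
  have hDn : (D : ℤ) * ((n : ℤ) - 1) = D * n - D := by ring
  omega
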